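/- Let X be a regular Hausdorff topological space and F ⊆ X an infinite subset. Then there exist an injective sequence (y_n)_{n∈ℕ} of elements of F and pairwise disjoint open sets (U_n)_{n∈ℕ} such that y_n ∈ U_n for all n. -/

import Mathlib

open Set Topology

/-- One step of the construction: given an open set `W` meeting `F` in an infinite set,
produce a point `y ∈ F`, an open `U ∋ y` inside `W`, and a smaller open `W' ⊆ W`
disjoint from `U` with `W' ∩ F` still infinite. -/
lemma stmt_7_step {X : Type*} [TopologicalSpace X] [T2Space X] [RegularSpace X]
    (F : Set X) (W : Set X) (hW : IsOpen W) (h : (W ∩ F).Infinite) :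
    ∃ (y : X) (U W' : Set X), y ∈ F ∧ y ∈ U ∧ IsOpen U ∧ IsOpen W' ∧
      U ⊆ W ∧ W' ⊆ W ∧ Disjoint U W' ∧ (W' ∩ F).Infinite := by
  obtain ⟨a, ha, b, hb, hab⟩ := h.nontrivial
  obtain ⟨A', B', hA'o, hB'o, haA', hbB', hAB⟩ := t2_separation hab
  set A := A' ∩ W with hA_def
  set B := B' ∩ W with hB_def
  have hAo : IsOpen A := hA'o.inter hW
  have hBo : IsOpen B := hB'o.inter hW
  have haA : a ∈ A := ⟨haA', ha.1⟩
  have hbB : b ∈ B := ⟨hbB', hb.1⟩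
  have hABdisj : Disjoint A B := hAB.mono (inter_subset_left) (inter_subset_left)
  by_cases hAinf : (A ∩ F).Infinite
  · exact ⟨b, B, A, hb.2, hbB, hBo, hAo, inter_subset_right, inter_subset_right,
      hABdisj.symm, hAinf⟩
  · have hfin : (A ∩ F).Finite := Set.not_infinite.mp hAinf
    set K := (A ∩ F) \ {a} with hK_def
    have hKfin : K.Finite := hfin.diff
    have hKcl : IsClosed K := hKfin.isClosed
    set V := A \ K with hV_def
    have hVo : IsOpen V := hAo.sdiff hKcl
    have haV : a ∈ V := ⟨haA, fun hk => hk.2 rfl⟩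
    obtain ⟨t, htmem, htcl, htsub⟩ :=
      exists_mem_nhds_isClosed_subset (hVo.mem_nhds haV)
    set U := interior t with hU_def
    have haU : a ∈ U := mem_interior_iff_mem_nhds.mpr htmem
    have hclU : closure U ⊆ V := by
      calc closure U ⊆ closure t := closure_mono interior_subset
        _ = t := htcl.closure_eq
        _ ⊆ V := htsub
    have hUV : U ⊆ V := interior_subset.trans htsub
    have hUW : U ⊆ W := fun x hx => ((hUV hx).1).2
    refine ⟨a, U, W \ closure U, ha.2, haU, isOpen_interior, hW.sdiff isClosed_closure,
      hUW, diff_subset, ?_, ?_⟩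
    · exact Set.disjoint_left.mpr fun x hx hx' => hx'.2 (subset_closure hx)
    · have hsub : (W ∩ F) \ {a} ⊆ (W \ closure U) ∩ F := by
        rintro x ⟨⟨hxW, hxF⟩, hxa⟩
        refine ⟨⟨hxW, fun hxc => ?_⟩, hxF⟩
        have hxV : x ∈ V := hclU hxc
        exact hxV.2 ⟨⟨hxV.1, hxF⟩, hxa⟩
      exact ((h.diff (finite_singleton a)).mono hsub)

/-- If `F` is an infinite subset of a regular Hausdorff space `X`, then there exist an
injective sequence `(yₙ)` of elements of `F` and pairwise disjoint open sets `(Uₙ)`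
with `yₙ ∈ Uₙ` for all `n`. -/
theorem stmt_7 {X : Type*} [TopologicalSpace X] [T2Space X] [RegularSpace X]
    (F : Set X) (hF : F.Infinite) :
    ∃ (y : ℕ → X) (U : ℕ → Set X),
      (∀ n, y n ∈ F) ∧ Function.Injective y ∧
      (∀ n, IsOpen (U n)) ∧ Pairwise (Function.onFun Disjoint U) ∧
      ∀ n, y n ∈ U n := by
  classical
  -- state type: open sets meeting F in an infinite set
  let T := {W : Set X // IsOpen W ∧ (W ∩ F).Infinite}
  have step : ∀ W : T, ∃ (y : X) (U W' : Set X), y ∈ F ∧ y ∈ U ∧ IsOpen U ∧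
      IsOpen W' ∧ U ⊆ W.1 ∧ W' ⊆ W.1 ∧ Disjoint U W' ∧ (W' ∩ F).Infinite :=
    fun W => stmt_7_step F W.1 W.2.1 W.2.2
  choose py pU pW' h1 h2 h3 h4 h5 h6 h7 h8 using step
  let next : T → T := fun W => ⟨pW' W, h4 W, h8 W⟩
  have h0 : (Set.univ ∩ F).Infinite := by simpa using hF
  let Wseq : ℕ → T := fun n => Nat.rec ⟨Set.univ, isOpen_univ, h0⟩ (fun _ W => next W) n
  have hWsucc : ∀ n, Wseq (n + 1) = next (Wseq n) := fun n => rfl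
  let y : ℕ → X := fun n => py (Wseq n)
  let U : ℕ → Set X := fun n => pU (Wseq n)
  have hmono : ∀ m n, m ≤ n → (Wseq n).1 ⊆ (Wseq m).1 := by
    intro m n hmn
    induction n with
    | zero => simp_all
    | succ k ih =>
      rcases Nat.lt_or_ge m (k + 1) with hlt | hge
      · exact (h6 (Wseq k)).trans (ih (Nat.lt_succ_iff.mp hlt))
      · have : m = k + 1 := le_antisymm hmn hge
        subst this; exact subset_rfl
  have hUW : ∀ n, U n ⊆ (Wseq n).1 := fun n => h5 (Wseq n)
  have hdisj : ∀ m n, m < n → Disjoint (U m) (U n) := by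
    intro m n hmn
    have h1' : (Wseq n).1 ⊆ (Wseq (m + 1)).1 := hmono (m + 1) n hmn
    have h2' : Disjoint (U m) (Wseq (m + 1)).1 := h7 (Wseq m)
    exact h2'.mono_right ((hUW n).trans h1')
  have hpair : Pairwise (Function.onFun Disjoint U) := by
    intro m n hmn
    rcases Nat.lt_or_ge m n with h | h
    · exact hdisj m n h
    · exact (hdisj n m (lt_of_le_of_ne h (Ne.symm hmn))).symm
  have hyU : ∀ n, y n ∈ U n := fun n => h2 (Wseq n)
  refine ⟨y, U, fun n => h1 (Wseq n), ?_, fun n => h3 (Wseq n), hpair, hyU⟩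
  intro m n hmn
  by_contra hne
  exact (hpair hne).ne_of_mem (hyU m) (hyU n) hmn
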